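/- Suppose every k-planar graph on n vertices has at most 3.81·n·√(2k) edges. Then every k-planar graph G with neighborhood diversity d has vertex cover number at most 2d · 8⌈√(2k)⌉ = 16d⌈√(2k)⌉. -/

import Mathlib

open Finset

lemma cbp_edge_count (t : ℕ) :
    (completeBipartiteGraph (Fin t) (Fin t)).edgeSet.ncard = t * t := by
  classical
  have hdeg : ∀ v, (completeBipartiteGraph (Fin t) (Fin t)).degree v = t := by
    rintro (i|i)
    · have h : (completeBipartiteGraph (Fin t) (Fin t)).neighborFinset (Sum.inl i)
          = Finset.univ.map ⟨Sum.inr, Sum.inr_injective⟩ := by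
        ext b; rw [SimpleGraph.mem_neighborFinset]; cases b <;> simp [completeBipartiteGraph]
      rw [← SimpleGraph.card_neighborFinset_eq_degree, h]; simp
    · have h : (completeBipartiteGraph (Fin t) (Fin t)).neighborFinset (Sum.inr i)
          = Finset.univ.map ⟨Sum.inl, Sum.inl_injective⟩ := by
        ext b; rw [SimpleGraph.mem_neighborFinset]; cases b <;> simp [completeBipartiteGraph]
      rw [← SimpleGraph.card_neighborFinset_eq_degree, h]; simp
  have hsum := SimpleGraph.sum_degrees_eq_twice_card_edges
    (completeBipartiteGraph (Fin t) (Fin t))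
  simp only [hdeg, Finset.sum_const, Finset.card_univ, smul_eq_mul,
    Fintype.card_sum, Fintype.card_fin, SimpleGraph.edgeFinset,
    ← Set.ncard_eq_toFinset_card'] at hsum
  have h2 : (t + t) * t = 2 * (t * t) := by ring
  omega

/-- Assuming (a) every `k`-planar graph on `n` vertices has at
most `3.81 · n · √(2k)` edges and (b) `k`-planarity is closed under taking
subgraphs, every `k`-planar graph whose vertex set is partitioned into `d`
twin classes (neighborhood diversity `d`) has a vertex cover of size at most
`2d · 8⌈√(2k)⌉ = 16d⌈√(2k)⌉`. -/
theorem stmt_6 (k : ℕ) (hk : 1 ≤ k)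
    (KPlanar : ∀ (V : Type) [Fintype V], SimpleGraph V → Prop)
    (hbound : ∀ (V : Type) [Fintype V] (G : SimpleGraph V), KPlanar V G →
      (G.edgeSet.ncard : ℝ) ≤ 3.81 * (Fintype.card V) * Real.sqrt (2 * k))
    (hsub : ∀ (V W : Type) [Fintype V] [Fintype W]
      (G : SimpleGraph V) (H : SimpleGraph W) (f : W ↪ V),
      (∀ a b, H.Adj a b → G.Adj (f a) (f b)) → KPlanar V G → KPlanar W H)
    {V : Type} [Fintype V] (G : SimpleGraph V) (hG : KPlanar V G)
    (d : ℕ) (c : V → Fin d)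
    (hclass : ∀ i : Fin d,
      (∀ u v : V, c u = i → c v = i → u ≠ v →
        G.Adj u v ∧ ∀ w, w ≠ u → w ≠ v → (G.Adj u w ↔ G.Adj v w)) ∨
      (∀ u v : V, c u = i → c v = i → u ≠ v →
        ¬ G.Adj u v ∧ ∀ w, G.Adj u w ↔ G.Adj v w)) :
    ∃ C : Finset V, (∀ u v, G.Adj u v → u ∈ C ∨ v ∈ C) ∧
      C.card ≤ 16 * d * ⌈Real.sqrt (2 * k)⌉₊ := by
  classical
  set s : ℝ := Real.sqrt (2 * k) with hs
  set m : ℕ := ⌈s⌉₊ with hm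
  set t : ℕ := 8 * m with htdef
  -- basic facts about s and t
  have hs1 : (1 : ℝ) ≤ s := by
    rw [hs]
    rw [show ((2 : ℝ) * k) = ((2 * k : ℕ) : ℝ) by push_cast; ring]
    have : (1 : ℕ) ≤ 2 * k := by omega
    have h1 : (1 : ℝ) ≤ ((2 * k : ℕ) : ℝ) := by exact_mod_cast this
    nlinarith [Real.sq_sqrt (by linarith : (0:ℝ) ≤ ((2 * k : ℕ) : ℝ)),
      Real.sqrt_nonneg ((2 * k : ℕ) : ℝ)]
  have hts : 8 * s ≤ (t : ℝ) := by
    have := Nat.le_ceil s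
    rw [htdef]
    push_cast
    nlinarith [this]
  -- no K_{t,t} in G
  have noKtt : ∀ f : Fin t ⊕ Fin t → V, Function.Injective f →
      (∀ a b, G.Adj (f (Sum.inl a)) (f (Sum.inr b))) → False := by
    intro f hinj hadj
    have hH : KPlanar (Fin t ⊕ Fin t) (completeBipartiteGraph (Fin t) (Fin t)) := by
      refine hsub V _ G _ ⟨f, hinj⟩ ?_ hG
      rintro (a | a) (b | b) hab
      · simp [completeBipartiteGraph] at hab
      · exact hadj a b
      · exact (hadj b a).symm
      · simp [completeBipartiteGraph] at hab
    have hedge := hbound _ _ hH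
    rw [cbp_edge_count t] at hedge
    have hV : (Fintype.card (Fin t ⊕ Fin t) : ℝ) = 2 * t := by
      simp [Fintype.card_sum]; ring
    rw [hV] at hedge
    have htpos : (8 : ℝ) ≤ (t : ℝ) := by nlinarith
    push_cast at hedge
    nlinarith [hedge, hs1, hts, htpos]
  -- the vertex cover
  set S : Fin d → Finset V := fun i => Finset.univ.filter (fun v => c v = i) with hS
  set C : Finset V := Finset.univ.filter (fun v => (S (c v)).card ≤ 2 * t) with hC
  refine ⟨C, ?_, ?_⟩
  · -- cover property
    intro u v huv
    by_contra hcon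
    push_neg at hcon
    obtain ⟨hu, hv⟩ := hcon
    have hbu : 2 * t < (S (c u)).card := by
      by_contra h; exact hu (by simp [hC]; omega)
    have hbv : 2 * t < (S (c v)).card := by
      by_contra h; exact hv (by simp [hC]; omega)
    have hmemS : ∀ i (x : V), x ∈ S i ↔ c x = i := by
      intro i x; simp [hS]
    by_cases hcc : c u = c v
    · -- same class: it must be a clique class, size > 2t gives K_{t,t}
      have hcl : ∀ x y : V, c x = c u → c y = c u → x ≠ y → G.Adj x y := by
        intro x y hx hy hne
        rcases hclass (c u) with h | h
        · exact (h x y hx hy hne).1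
        · exact absurd huv (h u v rfl hcc.symm (G.ne_of_adj huv)).1
      have hcard : Fintype.card (Fin t ⊕ Fin t) ≤ Fintype.card (S (c u)) := by
        simp [Fintype.card_sum, Fintype.card_coe]
        omega
      obtain ⟨e⟩ := Function.Embedding.nonempty_of_card_le hcard
      have hmem : ∀ x, c ((e x) : V) = c u := fun x => (hmemS _ _).mp (e x).2
      refine noKtt (fun x => ↑(e x)) ?_ ?_
      · intro x y hxy
        exact e.injective (Subtype.coe_injective hxy)
      · intro a b
        refine hcl _ _ (hmem _) (hmem _) ?_
        intro h
        exact absurd (e.injective (Subtype.coe_injective h)) (by simp)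
    · -- different classes: fully joined, sizes > 2t ≥ t give K_{t,t}
      have hjoin : ∀ x y : V, c x = c u → c y = c v → G.Adj x y := by
        intro x y hx hy
        have hxv : x ≠ v := by
          intro h; rw [h] at hx; exact hcc hx.symm
        have h1 : G.Adj x v := by
          by_cases hxu : x = u
          · rw [hxu]; exact huv
          · rcases hclass (c u) with h | h
            · have hvu : v ≠ u := by
                intro h'; exact hcc (by rw [h'])
              exact ((h u x rfl hx (Ne.symm hxu)).2 v hvu (Ne.symm hxv)).mp huv
            · exact ((h u x rfl hx (Ne.symm hxu)).2 v).mp huv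
        by_cases hyv : y = v
        · rw [hyv]; exact h1
        · have hxy : x ≠ y := by
            intro h; rw [h] at hx; exact hcc (hx.symm.trans hy)
          rcases hclass (c v) with h | h
          · exact (((h v y rfl hy (Ne.symm hyv)).2 x hxv hxy).mp h1.symm).symm
          · exact (((h v y rfl hy (Ne.symm hyv)).2 x).mp h1.symm).symm
      have hcard1 : Fintype.card (Fin t) ≤ Fintype.card (S (c u)) := by
        simp [Fintype.card_coe]; omega
      have hcard2 : Fintype.card (Fin t) ≤ Fintype.card (S (c v)) := by
        simp [Fintype.card_coe]; omega
      obtain ⟨e1⟩ := Function.Embedding.nonempty_of_card_le hcard1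
      obtain ⟨e2⟩ := Function.Embedding.nonempty_of_card_le hcard2
      have hmem1 : ∀ x, c ((e1 x) : V) = c u := fun x => (hmemS _ _).mp (e1 x).2
      have hmem2 : ∀ x, c ((e2 x) : V) = c v := fun x => (hmemS _ _).mp (e2 x).2
      refine noKtt (Sum.elim (fun a => ↑(e1 a)) (fun b => ↑(e2 b))) ?_ ?_
      · rintro (x | x) (y | y) hxy <;> simp only [Sum.elim_inl, Sum.elim_inr] at hxy
        · rw [e1.injective (Subtype.coe_injective hxy)]
        · exfalso; apply hcc; rw [← hmem1 x, hxy]; exact hmem2 y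
        · exfalso; apply hcc; rw [← hmem1 y, ← hxy]; exact hmem2 x
        · rw [e2.injective (Subtype.coe_injective hxy)]
      · intro a b
        exact hjoin _ _ (hmem1 a) (hmem2 b)
  · -- cardinality bound
    have hcount : C.card = ∑ i : Fin d, (C.filter (fun v => c v = i)).card :=
      Finset.card_eq_sum_card_fiberwise (fun x _ => Finset.mem_univ (c x))
    have hsmall : ∀ i : Fin d, (C.filter (fun v => c v = i)).card ≤ 2 * t := by
      intro i
      by_cases hne : (C.filter (fun v => c v = i)).Nonempty
      · obtain ⟨v, hvmem⟩ := hne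
        rw [Finset.mem_filter] at hvmem
        obtain ⟨hvC, hvi⟩ := hvmem
        have hvs : (S i).card ≤ 2 * t := by
          have := (Finset.mem_filter.mp hvC).2
          rwa [hvi] at this
        calc (C.filter (fun v => c v = i)).card ≤ (S i).card := by
              apply Finset.card_le_card
              intro x hx
              simp only [hS, Finset.mem_filter, Finset.mem_univ, true_and]
              exact (Finset.mem_filter.mp hx).2
          _ ≤ 2 * t := hvs
      · rw [Finset.not_nonempty_iff_eq_empty] at hne
        rw [hne]; simp
    calc C.card = ∑ i : Fin d, (C.filter (fun v => c v = i)).card := hcount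
      _ ≤ ∑ _i : Fin d, 2 * t := Finset.sum_le_sum (fun i _ => hsmall i)
      _ = d * (2 * t) := by simp [Finset.sum_const, Finset.card_univ, mul_comm]
      _ = 16 * d * m := by rw [htdef]; ring
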